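/- Let (W,S) be a Coxeter system, s, t ∈ S with m(s,t) = m finite. If m is even, then (P^{{s}}P^{{t}})^{m/2} = (P^{{t}}P^{{s}})^{m/2} as functions W → W; if m is odd, then P^{{t}}(P^{{s}}P^{{t}})^{(m-1)/2} = P^{{s}}(P^{{t}}P^{{s}})^{(m-1)/2}. In other words, the one-generator projections satisfy the braid relations of the Coxeter monoid. -/
import Mathlib


open CoxeterSystem

variable {B W : Type*} [Group W] {M : CoxeterMatrix B}

/-- The projection `P^{{s}}` onto `W^{{s}}`: removes a trailing `s` if that shortens `w`. -/
noncomputable def CoxeterSystem.projSimple (cs : CoxeterSystem M W) (s : B) (w : W) : W :=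
  if cs.length (w * cs.simple s) < cs.length w then w * cs.simple s else w

/-- For a word `ω = s₁ ⋯ s_k`, the composition `P^{{s₁}} ∘ ⋯ ∘ P^{{s_k}}`. -/
noncomputable def CoxeterSystem.projWord (cs : CoxeterSystem M W) (ω : List B) : W → W :=
  ω.foldr (fun s g => cs.projSimple s ∘ g) id

/-- The Bruhat order, via the subword property: `u ≤ v` iff some reduced word for `v`
has a subword whose product is `u`. -/
def CoxeterSystem.bruhatLE (cs : CoxeterSystem M W) (u v : W) : Prop :=
  ∃ ω : List B, cs.IsReduced ω ∧ cs.wordProd ω = v ∧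
    ∃ ω' : List B, ω'.Sublist ω ∧ cs.wordProd ω' = u

section Aux

open List

namespace StmtAux

variable {B W : Type*} [Group W] {M : CoxeterMatrix B}

/-- conjugation action of `W` on parity functions `W → Multiplicative (ZMod 2)`. -/
def conjAut (w : W) : (W → Multiplicative (ZMod 2)) ≃* (W → Multiplicative (ZMod 2)) where
  toFun n t := n (w⁻¹ * t * w)
  invFun n t := n (w * t * w⁻¹)
  left_inv n := by funext t; group
  right_inv n := by funext t; group
  map_mul' a b := rfl

def phi : W →* MulAut (W → Multiplicative (ZMod 2)) where
  toFun := conjAut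
  map_one' := by ext n t; simp [conjAut]
  map_mul' u v := by ext n t; simp [conjAut, mul_assoc]

open scoped Classical in
/-- Dirac delta function. -/
noncomputable def delta (r : W) : W → Multiplicative (ZMod 2) := fun t =>
  if t = r then Multiplicative.ofAdd 1 else 1

lemma phi_delta (w r : W) : phi w (delta r) = delta (w * r * w⁻¹) := by
  funext t
  simp only [phi, conjAut, MonoidHom.coe_mk, OneHom.coe_mk, MulEquiv.coe_mk, Equiv.coe_fn_mk,
    delta]
  congr 1
  simp only [eq_iff_iff]
  constructor
  · rintro rfl; group
  · rintro rfl; group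


variable (cs : CoxeterSystem M W)

local prefix:100 "s" => cs.simple
local prefix:100 "π" => cs.wordProd
local prefix:100 "ℓ" => cs.length

noncomputable def gen (b : B) : (W → Multiplicative (ZMod 2)) ⋊[phi] W :=
  ⟨delta (s b), s b⟩

lemma semiconj_pow (x y : W) (n : ℕ) : x * (y * x) ^ n = (x * y) ^ n * x := by
  induction n with
  | zero => simp
  | succ n ih =>
    rw [pow_succ, pow_succ, ← mul_assoc, ih]
    group

lemma conj_pow_simple (b b' : B) (n : ℕ) :
    (s b * s b') ^ n * (s b * ((s b * s b') ^ n)⁻¹) = (s b * s b') ^ (2 * n) * s b := by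
  have h1 : ((s b * s b') ^ n)⁻¹ = (s b' * s b) ^ n := by
    rw [← inv_pow, mul_inv_rev, cs.inv_simple, cs.inv_simple]
  rw [h1, semiconj_pow, ← mul_assoc, ← pow_add, two_mul]

lemma gen_mul_left (b b' : B) :
    (gen cs b * gen cs b').left
      = delta ((s b * s b') ^ 0 * s b) * delta ((s b * s b') ^ 1 * s b) := by
  show delta (s b) * phi (s b) (delta (s b')) = _
  rw [phi_delta]
  congr 1
  · congr 1; rw [pow_zero, one_mul]
  · congr 1; rw [pow_one, cs.inv_simple, mul_assoc]

lemma gen_pow (b b' : B) (n : ℕ) :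
    (gen cs b * gen cs b') ^ n =
      ⟨fun t => ((List.range (2 * n)).map
          (fun e => delta ((s b * s b') ^ e * s b) t)).prod,
        (s b * s b') ^ n⟩ := by
  induction n with
  | zero =>
    ext <;> simp
  | succ n ih =>
    rw [pow_succ, ih, SemidirectProduct.mul_def]
    congr 1
    · funext t
      have hr : (2 * (n + 1)) = (2 * n) + 1 + 1 := by ring
      rw [hr, List.range_succ, List.range_succ]
      simp only [List.map_append, List.prod_append, List.map_cons, List.map_nil,
        List.prod_cons, List.prod_nil, mul_one]
      have key : (phi ((s b * s b') ^ n) ((gen cs b * gen cs b').left)) t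
          = delta ((s b * s b') ^ (2 * n) * s b) t *
            delta ((s b * s b') ^ (2 * n + 1) * s b) t := by
        rw [gen_mul_left, map_mul, phi_delta, phi_delta]
        have e0 : (s b * s b') ^ n * ((s b * s b') ^ 0 * s b) * ((s b * s b') ^ n)⁻¹
            = (s b * s b') ^ (2 * n) * s b := by
          rw [pow_zero, one_mul, mul_assoc]
          exact conj_pow_simple cs b b' n
        have e1 : (s b * s b') ^ n * ((s b * s b') ^ 1 * s b) * ((s b * s b') ^ n)⁻¹
            = (s b * s b') ^ (2 * n + 1) * s b := by
          have hc : (s b * s b') ^ n * (s b * s b') = (s b * s b') * (s b * s b') ^ n := by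
            rw [← pow_succ, ← pow_succ']
          calc (s b * s b') ^ n * ((s b * s b') ^ 1 * s b) * ((s b * s b') ^ n)⁻¹
              = (s b * s b') ^ n * (s b * s b') * s b * ((s b * s b') ^ n)⁻¹ := by
                rw [pow_one, ← mul_assoc]
            _ = (s b * s b') * ((s b * s b') ^ n * (s b * ((s b * s b') ^ n)⁻¹)) := by
                rw [hc, mul_assoc, mul_assoc, mul_assoc]
            _ = (s b * s b') * ((s b * s b') ^ (2 * n) * s b) := by
                rw [conj_pow_simple cs b b' n]
            _ = (s b * s b') ^ (2 * n + 1) * s b := by rw [← mul_assoc, ← pow_succ']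
        rw [e0, e1]
        rfl
      rw [Pi.mul_apply, key, ← mul_assoc]
    · simp [gen, pow_succ, mul_assoc]

lemma gen_liftable : M.IsLiftable (fun b => gen cs b) := by
  intro b b'
  rw [gen_pow]
  ext t
  · simp only [SemidirectProduct.one_left, Pi.one_apply]
    have hsplit : 2 * M.M b b' = M.M b b' + M.M b b' := by ring
    rw [hsplit, List.range_add, List.map_append, List.prod_append]
    have : ∀ e, delta ((s b * s b') ^ (M.M b b' + e) * s b) t
        = delta ((s b * s b') ^ e * s b) t := by
      intro e
      rw [pow_add, cs.simple_mul_simple_pow, one_mul]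
    have hmap : (List.map (fun e => delta ((s b * s b') ^ e * s b) t)
          (List.map (fun e => M.M b b' + e) (List.range (M.M b b'))))
        = List.map (fun e => delta ((s b * s b') ^ e * s b) t) (List.range (M.M b b')) := by
      rw [List.map_map]
      exact List.map_congr_left (fun e _ => this e)
    rw [hmap]
    have habelian : ∀ l : List (Multiplicative (ZMod 2)), l.prod * l.prod = 1 := by
      intro l
      induction l with
      | nil => simp
      | cons x l ih =>
        simp only [List.prod_cons]
        rw [mul_mul_mul_comm, ih, mul_one]
        generalize x = y
        revert y; decide
    exact habelian _
  · simp [cs.simple_mul_simple_pow]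

/-- The cocycle representation. -/
noncomputable def rho : W →* (W → Multiplicative (ZMod 2)) ⋊[phi] W :=
  cs.lift ⟨fun b => gen cs b, gen_liftable cs⟩

lemma rho_simple (b : B) : rho cs (s b) = gen cs b :=
  cs.lift_apply_simple (gen_liftable cs) b

lemma rho_right (w : W) : (rho cs w).right = w := by
  have : (SemidirectProduct.rightHom.comp (rho cs)) = MonoidHom.id W := by
    apply cs.ext_simple
    intro b
    simp [rho_simple]
    rfl
  calc (rho cs w).right = (SemidirectProduct.rightHom.comp (rho cs)) w := rfl
    _ = w := by rw [this]; rfl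

lemma pi_list_prod_apply (l : List (W → Multiplicative (ZMod 2))) (t : W) :
    l.prod t = (l.map (fun f => f t)).prod := by
  induction l with
  | nil => rfl
  | cons f l ih => simp [List.prod_cons, ih]

lemma rho_wordProd (ω : List B) :
    (rho cs (π ω)).left = ((cs.leftInvSeq ω).map delta).prod := by
  induction ω with
  | nil => simp [rho]
  | cons b ω ih =>
    rw [cs.wordProd_cons, map_mul, rho_simple]
    show (gen cs b).left * phi ((gen cs b).right) ((rho cs (π ω)).left) = _
    rw [ih]
    show delta (s b) * phi (s b) _ = _
    have hseq : cs.leftInvSeq (b :: ω) = s b :: List.map (MulAut.conj (s b)) (cs.leftInvSeq ω) :=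
      rfl
    rw [hseq, List.map_cons, List.prod_cons, List.map_map]
    congr 1
    rw [map_list_prod, List.map_map]
    refine congrArg List.prod (List.map_congr_left ?_)
    intro r _
    show phi (s b) (delta r) = delta (MulAut.conj (s b) r)
    rw [phi_delta]
    rfl

lemma rho_left_ne_one_mem (ω : List B) (t : W)
    (h : (rho cs (π ω)).left t ≠ 1) : t ∈ cs.leftInvSeq ω := by
  by_contra hmem
  apply h
  rw [rho_wordProd, pi_list_prod_apply, List.map_map]
  apply List.prod_eq_one
  intro x hx
  obtain ⟨r, hr, rfl⟩ := List.mem_map.mp hx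
  show delta r t = 1
  unfold delta
  rw [if_neg]
  rintro rfl
  exact hmem hr

lemma rho_left_reflection (u : W) (b : B) :
    (rho cs (u * s b * u⁻¹)).left (u * s b * u⁻¹) = Multiplicative.ofAdd 1 := by
  set t := u * s b * u⁻¹ with ht
  have hrho : rho cs t = rho cs u * gen cs b * (rho cs u)⁻¹ := by
    rw [ht, map_mul, map_mul, map_inv, rho_simple]
  set g := (rho cs u).left with hg
  have hright : (rho cs u).right = u := rho_right cs u
  have hleft : (rho cs t).left
      = g * phi u (delta (s b)) * phi (u * s b * u⁻¹) (g⁻¹) := by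
    rw [hrho]
    show (rho cs u * gen cs b).left * phi ((rho cs u * gen cs b).right) ((rho cs u)⁻¹).left = _
    have h1 : (rho cs u * gen cs b).left = g * phi u (delta (s b)) := by
      show (rho cs u).left * phi ((rho cs u).right) ((gen cs b).left) = _
      rw [hright]; rfl
    have h2 : (rho cs u * gen cs b).right = u * s b := by
      show (rho cs u).right * (gen cs b).right = _
      rw [hright]; rfl
    have h3 : ((rho cs u)⁻¹).left = phi ((rho cs u).right)⁻¹ ((rho cs u).left)⁻¹ := rfl
    rw [h1, h2, h3, hright, ← hg]
    congr 1
    rw [← MulAut.mul_apply, ← map_mul]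
  rw [hleft, phi_delta]
  have hmid : u * s b * u⁻¹ = t := rfl
  rw [hmid]
  show g t * delta t t * (phi t (g⁻¹)) t = _
  have hd : delta t t = Multiplicative.ofAdd 1 := by unfold delta; rw [if_pos rfl]
  have hphi : (phi t (g⁻¹)) t = g⁻¹ t := by
    show (g⁻¹) (t⁻¹ * t * t) = g⁻¹ t
    congr 1
    group
  rw [hd, hphi, Pi.inv_apply,
    mul_comm (g t) (Multiplicative.ofAdd 1), mul_assoc, mul_inv_cancel, mul_one]

lemma two_cases (x : Multiplicative (ZMod 2)) : x = 1 ∨ x = Multiplicative.ofAdd 1 := by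
  revert x; decide

lemma rho_left_of_isLeftInversion {t v : W} (ht : cs.IsReflection t)
    (h : ℓ (t * v) < ℓ v) : (rho cs v).left t = Multiplicative.ofAdd 1 := by
  obtain ⟨u, b, rfl⟩ := ht
  set t := u * s b * u⁻¹ with htdef
  have htt : t * t = 1 := by
    rw [htdef]
    have : u * s b * u⁻¹ * (u * s b * u⁻¹) = u * (s b * s b) * u⁻¹ := by group
    rw [this, cs.simple_mul_simple_self, mul_one, mul_inv_cancel]
  have hv : v = t * (t * v) := by rw [← mul_assoc, htt, one_mul]
  have hsplit : (rho cs v).left t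
      = (rho cs t).left t * (rho cs (t * v)).left t := by
    conv_lhs => rw [hv]
    rw [map_mul]
    show ((rho cs t).left * phi ((rho cs t).right) ((rho cs (t*v)).left)) t = _
    rw [rho_right, Pi.mul_apply]
    congr 1
    show ((rho cs (t*v)).left) (t⁻¹ * t * t) = _
    congr 1
    group
  have hw' : (rho cs (t * v)).left t = 1 := by
    by_contra hne
    obtain ⟨ω, hred, hωeq⟩ := cs.exists_reduced_word' (t * v)
    rw [hωeq] at hne
    have hmem := rho_left_ne_one_mem cs ω t hne
    have hinv := cs.isLeftInversion_of_mem_leftInvSeq hred hmem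
    rw [← hωeq] at hinv
    have : ℓ (t * (t * v)) < ℓ (t * v) := hinv.2
    rw [← mul_assoc, htt, one_mul] at this
    omega
  rw [hsplit, hw', mul_one, rho_left_reflection]

/-- Strong exchange, right-handed, for simple reflections: if appending `s x` shortens,
then it equals the word with one letter deleted. -/
lemma exchange_right (ω : List B) (x : B)
    (h : ℓ (π ω * s x) < ℓ (π ω)) :
    ∃ c < ω.length, π ω * s x = π (ω.eraseIdx c) := by
  have hrefl : cs.IsReflection (s x) := cs.isReflection_simple x
  have hlen : ℓ (s x * (π ω)⁻¹) < ℓ ((π ω)⁻¹) := by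
    have h1 : s x * (π ω)⁻¹ = (π ω * s x)⁻¹ := by
      rw [mul_inv_rev, cs.inv_simple]
    rw [h1, cs.length_inv, cs.length_inv]
    exact h
  have hval : (rho cs ((π ω)⁻¹)).left (s x) = Multiplicative.ofAdd 1 :=
    rho_left_of_isLeftInversion cs hrefl hlen
  have hrev : π (ω.reverse) = (π ω)⁻¹ := cs.wordProd_reverse ω
  rw [← hrev] at hval
  have hmem : s x ∈ cs.leftInvSeq (ω.reverse) := by
    apply rho_left_ne_one_mem cs _ _
    rw [hval]
    decide
  rw [cs.leftInvSeq_reverse] at hmem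
  have hmem2 : s x ∈ cs.rightInvSeq ω := List.mem_reverse.mp hmem
  obtain ⟨c, hc, hceq⟩ := List.mem_iff_getElem.mp hmem2
  rw [cs.length_rightInvSeq] at hc
  refine ⟨c, hc, ?_⟩
  have := cs.wordProd_mul_getD_rightInvSeq ω c
  rw [← this]
  congr 1
  rw [List.getD_eq_getElem _ _ (by rw [cs.length_rightInvSeq]; exact hc), hceq]

/-! ### Part B: dihedral normal forms -/

/-- The two letters, indexed by `Bool`. -/
def iot (a b : B) : Bool → B := fun c => if c then a else b

section Dihedral

variable (a b : B)

local notation "ι" => iot a b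

/-- `p = s_a s_b`. -/
def dgen : W := s a * s b

/-- order of `p`. -/
noncomputable def mord : ℕ := orderOf (dgen cs a b)

/-- Alternating word of length `k` ending in the letter `ι c`. -/
noncomputable def fel (c : Bool) (k : ℕ) : W :=
  π (alternatingWord (ι (!c)) (ι c) k)

@[simp] lemma fel_zero (c : Bool) : fel cs a b c 0 = 1 := by
  unfold fel alternatingWord
  exact cs.wordProd_nil

lemma fel_one (c : Bool) : fel cs a b c 1 = s (ι c) := by
  unfold fel
  have : alternatingWord (ι (!c)) (ι c) 1 = [ι c] := rfl
  rw [this, cs.wordProd_singleton]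

lemma dgen_inv : (dgen cs a b)⁻¹ = s b * s a := by
  unfold dgen
  rw [mul_inv_rev, cs.inv_simple, cs.inv_simple]

lemma sb_eq : s b = s a * dgen cs a b := by
  unfold dgen
  rw [← mul_assoc, cs.simple_mul_simple_self, one_mul]

lemma sa_eq : s a = s b * (dgen cs a b)⁻¹ := by
  rw [dgen_inv, ← mul_assoc, cs.simple_mul_simple_self, one_mul]

/-- sign of the orientation. -/
def eps (c : Bool) : ℤ := cond c (-1) 1

lemma formz (c : Bool) (k : ℕ) :
    fel cs a b c k = (if Even k then 1 else s (ι c)) * (dgen cs a b) ^ (eps c * (k / 2 : ℕ)) := by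
  unfold fel
  rw [cs.prod_alternatingWord_eq_mul_pow]
  congr 1
  cases c
  · show (s (ι true) * s (ι false)) ^ (k / 2) = _
    show (s a * s b) ^ (k / 2) = _
    rw [show eps false * ((k:ℕ)/2 : ℕ) = ((k/2 : ℕ) : ℤ) by simp [eps]]
    rw [zpow_natCast]
    rfl
  · show (s (ι false) * s (ι true)) ^ (k / 2) = _
    show (s b * s a) ^ (k / 2) = _
    rw [show eps true * ((k:ℕ)/2 : ℕ) = -((k/2 : ℕ) : ℤ) by simp [eps]]
    rw [zpow_neg, zpow_natCast, ← dgen_inv cs a b, inv_pow]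

lemma dgen_zpow_mord : (dgen cs a b) ^ ((mord cs a b : ℕ) : ℤ) = 1 := by
  rw [zpow_natCast, mord, pow_orderOf_eq_one]

lemma pord {z : ℤ} (h : (dgen cs a b) ^ z = 1) (h1 : -((mord cs a b : ℕ) : ℤ) < z)
    (h2 : z < ((mord cs a b : ℕ) : ℤ)) : z = 0 := by
  have hdvd : ((mord cs a b : ℕ) : ℤ) ∣ z := orderOf_dvd_iff_zpow_eq_one.mpr h
  obtain ⟨q, rfl⟩ := hdvd
  set m := ((mord cs a b : ℕ) : ℤ) with hm
  have hm0 : 0 ≤ m := by positivity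
  rcases lt_trichotomy q 0 with hq | hq | hq
  · nlinarith
  · rw [hq, mul_zero]
  · nlinarith

lemma lp_word (ω : List B) :
    cs.lengthParity (π ω) = Multiplicative.ofAdd ((ω.length : ZMod 2)) := by
  induction ω with
  | nil => simp
  | cons x ω ih =>
    rw [cs.wordProd_cons, map_mul, ih, cs.lengthParity_simple]
    rw [← ofAdd_add]
    congr 1
    simp only [List.length_cons]
    push_cast
    ring

lemma fel_parity {c k c' k'} (h : fel cs a b c k = fel cs a b c' k') : k % 2 = k' % 2 := by
  have h1 := congrArg cs.lengthParity h
  unfold fel at h1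
  rw [lp_word, lp_word] at h1
  simp only [length_alternatingWord] at h1
  have h2 : ((k : ZMod 2)) = (k' : ZMod 2) := by
    have := congrArg Multiplicative.toAdd h1
    simpa using this
  have := (ZMod.natCast_eq_natCast_iff k k' 2).mp h2
  exact this

lemma pord_nat {z1 z2 : ℤ} (h : (dgen cs a b) ^ z1 = (dgen cs a b) ^ z2)
    (hb1 : -((mord cs a b : ℕ) : ℤ) < z1 - z2) (hb2 : z1 - z2 < ((mord cs a b : ℕ) : ℤ)) :
    z1 = z2 := by
  have hzero : (dgen cs a b) ^ (z1 - z2) = 1 := by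
    rw [zpow_sub, h, mul_inv_cancel]
  have := pord cs a b hzero hb1 hb2
  omega

lemma fel_inj {c k c' k'} (hk : k ≤ mord cs a b) (hlt : k' < k) :
    fel cs a b c k ≠ fel cs a b c' k' := by
  intro h
  have hpar := fel_parity cs a b h
  set m := mord cs a b with hm
  have hmcast : (k : ℤ) ≤ (m : ℤ) := by exact_mod_cast hk
  rcases Nat.even_or_odd k with he | ho
  · -- both even
    obtain ⟨e, rfl⟩ := he
    have he' : Even k' := by
      rcases Nat.even_or_odd k' with h' | h'
      · exact h'
      · exfalso; rw [Nat.odd_iff] at h'; omega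
    obtain ⟨e', rfl⟩ := he'
    rw [formz, formz, if_pos (by exact ⟨e, rfl⟩), if_pos (by exact ⟨e', rfl⟩),
      one_mul, one_mul] at h
    have hdiv : ((e + e) / 2 : ℕ) = e := by omega
    have hdiv' : ((e' + e') / 2 : ℕ) = e' := by omega
    rw [hdiv, hdiv'] at h
    have hee : (e : ℤ) + e ≤ m := by exact_mod_cast hmcast
    have hee' : (e' : ℤ) + e' < e + e := by exact_mod_cast hlt
    have key := pord_nat cs a b h
      (by cases c <;> cases c' <;>
        simp only [eps, Bool.cond_true, Bool.cond_false] <;> omega)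
      (by cases c <;> cases c' <;>
        simp only [eps, Bool.cond_true, Bool.cond_false] <;> omega)
    cases c <;> cases c' <;>
      simp only [eps, Bool.cond_true, Bool.cond_false] at key <;> omega
  · -- both odd
    obtain ⟨e, rfl⟩ := ho
    have ho' : Odd k' := by
      rcases Nat.even_or_odd k' with h' | h'
      · exfalso; rw [Nat.even_iff] at h'; omega
      · exact h'
    obtain ⟨e', rfl⟩ := ho'
    rw [formz, formz, if_neg (by simp [Nat.even_add_one, parity_simps]),
      if_neg (by simp [Nat.even_add_one, parity_simps])] at h
    have hdiv : ((2 * e + 1) / 2 : ℕ) = e := by omega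
    have hdiv' : ((2 * e' + 1) / 2 : ℕ) = e' := by omega
    rw [hdiv, hdiv'] at h
    have hee : 2 * (e : ℤ) + 1 ≤ m := by exact_mod_cast hmcast
    have hee' : 2 * (e' : ℤ) + 1 < 2 * e + 1 := by exact_mod_cast hlt
    cases c <;> cases c'
    · -- both false : letter b, eps = 1
      simp only [eps, Bool.cond_false, one_mul] at h
      have h2 := mul_left_cancel h
      have key := pord_nat cs a b h2 (by omega) (by omega)
      omega
    · -- c = false (letter b, exp e), c' = true (letter a, exp -e')
      simp only [eps, Bool.cond_false, Bool.cond_true, one_mul, neg_mul] at h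
      have hb' : s (iot a b false) = s a * dgen cs a b := sb_eq cs a b
      have ha' : s (iot a b true) = s a := rfl
      rw [hb', ha', mul_assoc] at h
      have h2 := mul_left_cancel h
      have h3 : (dgen cs a b) ^ (1 + (e : ℤ)) = (dgen cs a b) ^ (-(e' : ℤ)) := by
        rw [zpow_one_add]; exact h2
      have key := pord_nat cs a b h3 (by omega) (by omega)
      omega
    · -- c = true (letter a, exp -e), c' = false (letter b, exp e')
      simp only [eps, Bool.cond_false, Bool.cond_true, one_mul, neg_mul] at h
      have hb' : s (iot a b false) = s a * dgen cs a b := sb_eq cs a b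
      have ha' : s (iot a b true) = s a := rfl
      rw [hb', ha', mul_assoc] at h
      have h2 := mul_left_cancel h
      have h3 : (dgen cs a b) ^ (-(e : ℤ)) = (dgen cs a b) ^ (1 + (e' : ℤ)) := by
        rw [zpow_one_add]; exact h2
      have key := pord_nat cs a b h3 (by omega) (by omega)
      omega
    · -- both true : letter a, eps = -1
      simp only [eps, Bool.cond_true, neg_mul] at h
      have h2 := mul_left_cancel h
      have key := pord_nat cs a b h2 (by omega) (by omega)
      omega

lemma idA {c : Bool} {k : ℕ} (h1 : mord cs a b ≤ k) (h2 : k ≤ 2 * mord cs a b) :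
    fel cs a b c k = fel cs a b (!c) (2 * mord cs a b - k) := by
  have hzm := dgen_zpow_mord cs a b
  set m := mord cs a b with hm
  clear_value m
  rcases Nat.even_or_odd k with he | ho
  · obtain ⟨e, rfl⟩ := he
    have hpar : Even (2 * m - (e + e)) := ⟨m - e, by omega⟩
    rw [formz, formz, if_pos ⟨e, rfl⟩, if_pos hpar, one_mul, one_mul]
    have hdiv : ((e + e) / 2 : ℕ) = e := by omega
    have hdiv2 : ((2 * m - (e + e)) / 2 : ℕ) = m - e := by omega
    rw [hdiv, hdiv2]
    have hcast : ((m - e : ℕ) : ℤ) = (m : ℤ) - e := by omega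
    cases c
    · simp only [eps, Bool.cond_true, Bool.cond_false, Bool.not_false]
      rw [hcast]
      have hexp : (1 : ℤ) * e = (-1) * ((m:ℤ) - e) + m := by ring
      rw [hexp, zpow_add, hzm, mul_one]
    · simp only [eps, Bool.cond_true, Bool.cond_false, Bool.not_true]
      rw [hcast]
      have hexp : (-1 : ℤ) * e = 1 * ((m:ℤ) - e) + (-(m:ℤ)) := by ring
      rw [hexp, zpow_add, zpow_neg, hzm, inv_one, mul_one]
  · obtain ⟨e, rfl⟩ := ho
    have hpar : ¬ Even (2 * m - (2 * e + 1)) := by rintro ⟨u, hu⟩; omega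
    rw [formz, formz, if_neg (by simp [parity_simps]), if_neg hpar]
    have hdiv : ((2 * e + 1) / 2 : ℕ) = e := by omega
    have hdiv2 : ((2 * m - (2 * e + 1)) / 2 : ℕ) = m - e - 1 := by omega
    rw [hdiv, hdiv2]
    have hem : e < m := by omega
    have hcast : ((m - e - 1 : ℕ) : ℤ) = (m : ℤ) - e - 1 := by omega
    have hb' : s (iot a b false) = s a * dgen cs a b := sb_eq cs a b
    have ha' : s (iot a b true) = s a := rfl
    cases c
    · -- c = false : s b * p^e = s a * p^(-(m-e-1))
      simp only [eps, Bool.cond_true, Bool.cond_false, Bool.not_false]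
      rw [hb', ha', mul_assoc, hcast]
      congr 1
      rw [← zpow_one_add]
      have hexp : (1 : ℤ) + 1 * e = (-1) * ((m:ℤ) - e - 1) + m := by ring
      rw [hexp, zpow_add, hzm, mul_one]
    · -- c = true : s a * p^(-e) = s b * p^(m-e-1) = s a * p^(1 + (m-e-1))
      simp only [eps, Bool.cond_true, Bool.cond_false, Bool.not_true]
      rw [hb', ha', mul_assoc, hcast]
      congr 1
      rw [← zpow_one_add]
      have hexp : (-1 : ℤ) * e = (1 : ℤ) + 1 * ((m:ℤ) - e - 1) + (-(m:ℤ)) := by ring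
      rw [hexp, zpow_add, zpow_neg, hzm, inv_one, mul_one]

lemma idB (c : Bool) (k : ℕ) :
    fel cs a b c (k + 2 * mord cs a b) = fel cs a b c k := by
  have hzm := dgen_zpow_mord cs a b
  set m := mord cs a b with hm
  clear_value m
  rcases Nat.even_or_odd k with he | ho
  · obtain ⟨e, rfl⟩ := he
    have hev : Even (e + e + 2 * m) := ⟨e + m, by omega⟩
    rw [formz, formz, if_pos hev, if_pos ⟨e, rfl⟩]
    have hdiv : ((e + e + 2 * m) / 2 : ℕ) = e + m := by omega
    have hdiv2 : ((e + e) / 2 : ℕ) = e := by omega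
    rw [hdiv, hdiv2]
    congr 1
    have hcast : ((e + m : ℕ) : ℤ) = (e : ℤ) + m := by push_cast; ring
    rw [hcast]
    cases c <;> simp only [eps, Bool.cond_true, Bool.cond_false]
    · rw [show (1:ℤ) * ((e:ℤ) + m) = 1 * e + m by ring, zpow_add, hzm, mul_one]
    · rw [show (-1:ℤ) * ((e:ℤ) + m) = -1 * e + (-(m:ℤ)) by ring, zpow_add, zpow_neg,
        hzm, inv_one, mul_one]
  · obtain ⟨e, rfl⟩ := ho
    have h1 : ¬ Even (2 * e + 1 + 2 * m) := by rintro ⟨u, hu⟩; omega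
    rw [formz, formz, if_neg h1, if_neg (by simp [parity_simps])]
    have hdiv : ((2 * e + 1 + 2 * m) / 2 : ℕ) = e + m := by omega
    have hdiv2 : ((2 * e + 1) / 2 : ℕ) = e := by omega
    rw [hdiv, hdiv2]
    congr 1
    have hcast : ((e + m : ℕ) : ℤ) = (e : ℤ) + m := by push_cast; ring
    rw [hcast]
    cases c <;> simp only [eps, Bool.cond_true, Bool.cond_false]
    · rw [show (1:ℤ) * ((e:ℤ) + m) = 1 * e + m by ring, zpow_add, hzm, mul_one]
    · rw [show (-1:ℤ) * ((e:ℤ) + m) = -1 * e + (-(m:ℤ)) by ring, zpow_add, zpow_neg,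
        hzm, inv_one, mul_one]

lemma reduceFel (hpos : 0 < mord cs a b) :
    ∀ k (c : Bool), ∃ c' k', k' ≤ mord cs a b ∧ fel cs a b c k = fel cs a b c' k' := by
  intro k
  induction k using Nat.strong_induction_on with
  | _ k ih =>
    intro c
    by_cases h1 : k ≤ mord cs a b
    · exact ⟨c, k, h1, rfl⟩
    · by_cases h2 : k ≤ 2 * mord cs a b
      · exact ⟨!c, 2 * mord cs a b - k, by omega, idA cs a b (by omega) h2⟩
      · have hlt : k - 2 * mord cs a b < k := by omega
        obtain ⟨c', k', hk', heq⟩ := ih (k - 2 * mord cs a b) hlt c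
        refine ⟨c', k', hk', ?_⟩
        rw [← heq, ← idB cs a b c (k - 2 * mord cs a b),
          show k - 2 * mord cs a b + 2 * mord cs a b = k by omega]

/-- Prepend rule. -/
lemma fel_succ (c : Bool) (k : ℕ) :
    fel cs a b c (k + 1) = s (iot a b (if Even k then c else !c)) * fel cs a b c k := by
  unfold fel
  rw [alternatingWord_succ', cs.wordProd_cons]
  congr 2
  rw [apply_ite (iot a b)]

/-- Append same letter : cancels. -/
lemma fel_concat_same (c : Bool) (k : ℕ) (hk : 1 ≤ k) :
    fel cs a b c k * s (iot a b c) = fel cs a b (!c) (k - 1) := by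
  obtain ⟨k', rfl⟩ : ∃ k', k = k' + 1 := ⟨k - 1, by omega⟩
  have h1 : fel cs a b c (k' + 1) = fel cs a b (!c) k' * s (iot a b c) := by
    unfold fel
    rw [alternatingWord_succ, cs.wordProd_concat, Bool.not_not]
  rw [h1, mul_assoc, cs.simple_mul_simple_self, mul_one]
  norm_num

/-- Append other letter : extends. -/
lemma fel_concat_other (c : Bool) (k : ℕ) :
    fel cs a b c k * s (iot a b (!c)) = fel cs a b (!c) (k + 1) := by
  have h1 : fel cs a b (!c) (k + 1) = fel cs a b (!(!c)) k * s (iot a b (!c)) := by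
    unfold fel
    rw [alternatingWord_succ, cs.wordProd_concat, Bool.not_not]
  rw [h1, Bool.not_not]

lemma altmap (x y : Bool) (k : ℕ) :
    (alternatingWord x y k).map (iot a b) = alternatingWord (iot a b x) (iot a b y) k := by
  induction k generalizing x y with
  | zero => rfl
  | succ k ih =>
    rw [alternatingWord_succ, alternatingWord_succ, List.map_concat, ih]

lemma w1 (β : List Bool) :
    ∃ c k, k ≤ β.length ∧ π (β.map (iot a b)) = fel cs a b c k := by
  induction β with
  | nil => exact ⟨true, 0, le_refl 0, by simp⟩
  | cons x β ih =>
    obtain ⟨c, k, hk, heq⟩ := ih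
    have hcons : π ((x :: β).map (iot a b)) = s (iot a b x) * fel cs a b c k := by
      rw [List.map_cons, cs.wordProd_cons, heq]
    rcases Nat.eq_zero_or_pos k with rfl | hkpos
    · refine ⟨x, 1, by rw [List.length_cons]; omega, ?_⟩
      rw [hcons, fel_zero, mul_one, fel_one]
    · obtain ⟨k', rfl⟩ : ∃ k', k = k' + 1 := ⟨k - 1, by omega⟩
      by_cases hx : x = (if Even (k' + 1) then c else !c)
      · refine ⟨c, k' + 2, by rw [List.length_cons]; omega, ?_⟩
        rw [hcons, show k' + 2 = (k' + 1) + 1 from rfl, fel_succ cs a b c (k' + 1), ← hx]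
      · have hx' : x = (if Even k' then c else !c) := by
          rcases Nat.even_or_odd k' with hp | hp
          · have : ¬ Even (k' + 1) := by simp [Nat.even_add_one, hp]
            rw [if_neg this] at hx
            rw [if_pos hp]
            cases x <;> cases c <;> simp_all
          · obtain ⟨t, rfl⟩ := hp
            have hpe : Even (2 * t + 1 + 1) := ⟨t + 1, by ring⟩
            have hno : ¬ Even (2 * t + 1) := by
              rintro ⟨u, hu⟩; omega
            rw [if_pos hpe] at hx
            rw [if_neg hno]
            cases x <;> cases c <;> simp_all
        refine ⟨c, k', by rw [List.length_cons]; omega, ?_⟩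
        rw [hcons, fel_succ cs a b c k', ← hx', ← mul_assoc, cs.simple_mul_simple_self, one_mul]

lemma eraseIdx_map' (f : Bool → B) (l : List Bool) (n : ℕ) :
    (l.map f).eraseIdx n = (l.eraseIdx n).map f := by
  rw [List.eraseIdx_eq_take_drop_succ, List.eraseIdx_eq_take_drop_succ, List.map_append,
    List.map_take, List.map_drop]

lemma g1' (u : W) (hmin : ∀ γ : List Bool, ℓ u ≤ ℓ (u * π (γ.map (iot a b)))) :
    ∀ n (β : List Bool), β.length = n →
      (∀ γ : List Bool, π (γ.map (iot a b)) = π (β.map (iot a b)) → n ≤ γ.length) →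
      ℓ (u * π (β.map (iot a b))) = ℓ u + n := by
  intro n
  induction n using Nat.strong_induction_on with
  | _ n ih =>
    intro β hlen hminβ
    rcases n with _ | n'
    · have hβ : β = [] := List.length_eq_zero_iff.mp hlen
      subst hβ
      simp
    · rcases List.eq_nil_or_concat β with rfl | ⟨β', x, rfl⟩
      · simp at hlen
      · rw [List.length_concat] at hlen
        have hlen' : β'.length = n' := by omega
        have hmin' : ∀ γ : List Bool, π (γ.map (iot a b)) = π (β'.map (iot a b)) →
            n' ≤ γ.length := by
          intro γ hγ
          have h1 : π ((γ.concat x).map (iot a b)) = π ((β'.concat x).map (iot a b)) := by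
            rw [List.map_concat, List.map_concat, cs.wordProd_concat, cs.wordProd_concat, hγ]
          have h2 := hminβ (γ.concat x) h1
          rw [List.length_concat] at h2
          omega
        have ihd : ℓ (u * π (β'.map (iot a b))) = ℓ u + n' :=
          ih n' (by omega) β' hlen' hmin'
        obtain ⟨ω, hω, hu⟩ := cs.exists_reduced_word' u
        have hωlen : ω.length = ℓ u := by rw [hu]; exact hω.symm
        have happ : π (ω ++ β'.map (iot a b)) = u * π (β'.map (iot a b)) := by
          rw [cs.wordProd_append, ← hu]
        have hred : cs.IsReduced (ω ++ β'.map (iot a b)) := by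
          unfold CoxeterSystem.IsReduced
          rw [happ, ihd, List.length_append, List.length_map, hωlen, hlen']
        have hsplit : π ((β'.concat x).map (iot a b))
            = π (β'.map (iot a b)) * s (iot a b x) := by
          rw [List.map_concat, cs.wordProd_concat]
        rcases cs.length_mul_simple (u * π (β'.map (iot a b))) (iot a b x) with hp | hm
        · rw [hsplit, ← mul_assoc, hp, ihd]
          omega
        · -- shortening case: contradiction
          exfalso
          have hlt : ℓ (π (ω ++ β'.map (iot a b)) * s (iot a b x))
              < ℓ (π (ω ++ β'.map (iot a b))) := by
            rw [happ]
            omega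
          obtain ⟨c, hc, hceq⟩ := exchange_right cs (ω ++ β'.map (iot a b)) (iot a b x) hlt
          rw [happ] at hceq
          rw [List.length_append, List.length_map] at hc
          by_cases hcω : c < ω.length
          · rw [List.eraseIdx_append_of_lt_length hcω] at hceq
            have hval : u * π ((β' ++ [x] ++ β'.reverse).map (iot a b))
                = π (ω.eraseIdx c) := by
              have hrev : π ((β'.reverse).map (iot a b)) = (π (β'.map (iot a b)))⁻¹ := by
                rw [List.map_reverse, cs.wordProd_reverse]
              rw [List.map_append, List.map_append, cs.wordProd_append, cs.wordProd_append,
                hrev]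
              have : π ([x].map (iot a b)) = s (iot a b x) := by
                simp [cs.wordProd_singleton]
              rw [this]
              rw [cs.wordProd_append] at hceq
              calc u * (π (β'.map (iot a b)) * s (iot a b x) * (π (β'.map (iot a b)))⁻¹)
                  = (u * π (β'.map (iot a b)) * s (iot a b x)) * (π (β'.map (iot a b)))⁻¹ := by
                    group
                _ = π (ω.eraseIdx c) * π (β'.map (iot a b)) * (π (β'.map (iot a b)))⁻¹ := by
                    rw [hceq]
                _ = π (ω.eraseIdx c) := by group
            have hle1 := hmin (β' ++ [x] ++ β'.reverse)
            rw [hval] at hle1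
            have hle2 : ℓ (π (ω.eraseIdx c)) ≤ (ω.eraseIdx c).length :=
              cs.length_wordProd_le _
            have hle3 : (ω.eraseIdx c).length + 1 = ω.length :=
              List.length_eraseIdx_add_one hcω
            omega
          · push_neg at hcω
            rw [List.eraseIdx_append_of_length_le hcω] at hceq
            have hceq2 : u * (π (β'.map (iot a b)) * s (iot a b x))
                = u * π ((β'.eraseIdx (c - ω.length)).map (iot a b)) := by
              rw [← mul_assoc, hceq, cs.wordProd_append, eraseIdx_map', ← hu]
            have hceq3 := mul_left_cancel hceq2
            have hβeq : π ((β'.eraseIdx (c - ω.length)).map (iot a b))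
                = π ((β'.concat x).map (iot a b)) := by
              rw [hsplit, ← hceq3]
            have h4 := hminβ _ hβeq
            have h5 : c - ω.length < β'.length := by omega
            have h6 : (β'.eraseIdx (c - ω.length)).length + 1 = β'.length :=
              List.length_eraseIdx_add_one h5
            omega

lemma g1 (u : W) (hmin : ∀ γ : List Bool, ℓ u ≤ ℓ (u * π (γ.map (iot a b))))
    (c : Bool) (k : ℕ) (hk : k ≤ mord cs a b) :
    ℓ (u * fel cs a b c k) = ℓ u + k := by
  have hβ : π ((alternatingWord (!c) c k).map (iot a b)) = fel cs a b c k := by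
    rw [altmap]; rfl
  have := g1' cs a b u hmin k (alternatingWord (!c) c k) (length_alternatingWord _ _ _) ?_
  · rw [hβ] at this; exact this
  · intro γ hγ
    by_contra hcon
    push_neg at hcon
    obtain ⟨c'', k'', hk'', heq⟩ := w1 cs a b γ
    rw [hβ, heq] at hγ
    exact fel_inj cs a b hk (by omega) hγ.symm

/-! ### Part D: dynamics -/

noncomputable def altProj : ℕ → Bool → W → W
  | 0, _, w => w
  | n + 1, c, w => altProj n (!c) (cs.projSimple (iot a b c) w)

@[simp] lemma altProj_zero (c : Bool) (w : W) : altProj cs a b 0 c w = w := rfl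

lemma altProj_succ (n : ℕ) (c : Bool) (w : W) :
    altProj cs a b (n + 1) c w = altProj cs a b n (!c) (cs.projSimple (iot a b c) w) := rfl

variable {u : W}

lemma proj_min (hmin : ∀ γ : List Bool, ℓ u ≤ ℓ (u * π (γ.map (iot a b)))) (c : Bool) :
    cs.projSimple (iot a b c) u = u := by
  unfold CoxeterSystem.projSimple
  rw [if_neg]
  push_neg
  have := hmin [c]
  simpa using this

lemma step_down (hmin : ∀ γ : List Bool, ℓ u ≤ ℓ (u * π (γ.map (iot a b))))
    {c : Bool} {k : ℕ} (h1 : 1 ≤ k) (hk : k ≤ mord cs a b) :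
    cs.projSimple (iot a b c) (u * fel cs a b c k) = u * fel cs a b (!c) (k - 1) := by
  have hvl : u * fel cs a b c k * s (iot a b c) = u * fel cs a b (!c) (k - 1) := by
    rw [mul_assoc, fel_concat_same cs a b c k h1]
  unfold CoxeterSystem.projSimple
  rw [hvl, if_pos]
  rw [g1 cs a b u hmin c k hk, g1 cs a b u hmin (!c) (k-1) (by omega)]
  omega

lemma step_up (hmin : ∀ γ : List Bool, ℓ u ≤ ℓ (u * π (γ.map (iot a b))))
    {c : Bool} {k : ℕ} (hk : k + 1 ≤ mord cs a b) :
    cs.projSimple (iot a b (!c)) (u * fel cs a b c k) = u * fel cs a b c k := by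
  have hvl : u * fel cs a b c k * s (iot a b (!c)) = u * fel cs a b (!c) (k + 1) := by
    rw [mul_assoc, fel_concat_other]
  unfold CoxeterSystem.projSimple
  rw [hvl, if_neg]
  rw [g1 cs a b u hmin c k (by omega), g1 cs a b u hmin (!c) (k+1) hk]
  omega

lemma step_top (hmin : ∀ γ : List Bool, ℓ u ≤ ℓ (u * π (γ.map (iot a b))))
    {c : Bool} (hpos : 0 < mord cs a b) :
    cs.projSimple (iot a b (!c)) (u * fel cs a b c (mord cs a b))
      = u * fel cs a b c (mord cs a b - 1) := by
  have hwrap : fel cs a b (!c) (mord cs a b + 1) = fel cs a b c (mord cs a b - 1) := by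
    have := idA cs a b (c := !c) (k := mord cs a b + 1) (by omega) (by omega)
    rw [this, Bool.not_not, show 2 * mord cs a b - (mord cs a b + 1) = mord cs a b - 1 by omega]
  have hvl : u * fel cs a b c (mord cs a b) * s (iot a b (!c))
      = u * fel cs a b c (mord cs a b - 1) := by
    rw [mul_assoc, fel_concat_other, hwrap]
  unfold CoxeterSystem.projSimple
  rw [hvl, if_pos]
  rw [g1 cs a b u hmin c _ (le_refl _), g1 cs a b u hmin c _ (by omega : mord cs a b - 1 ≤ _)]
  omega

lemma altProj_min (hmin : ∀ γ : List Bool, ℓ u ≤ ℓ (u * π (γ.map (iot a b)))) :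
    ∀ n (c : Bool), altProj cs a b n c u = u := by
  intro n
  induction n with
  | zero => intro c; rfl
  | succ n ih =>
    intro c
    rw [altProj_succ, proj_min cs a b hmin c, ih]

lemma aligned (hmin : ∀ γ : List Bool, ℓ u ≤ ℓ (u * π (γ.map (iot a b)))) :
    ∀ k, k < mord cs a b → ∀ n (c : Bool), k ≤ n →
      altProj cs a b n c (u * fel cs a b c k) = u := by
  intro k
  induction k with
  | zero =>
    intro _ n c _
    rw [fel_zero, mul_one]
    exact altProj_min cs a b hmin n c
  | succ k ihk =>
    intro hk n c hn
    obtain ⟨n', rfl⟩ : ∃ n', n = n' + 1 := ⟨n - 1, by omega⟩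
    rw [altProj_succ, step_down cs a b hmin (by omega) (by omega)]
    exact ihk (by omega) n' (!c) (by omega)

lemma main_dyn (hmin : ∀ γ : List Bool, ℓ u ≤ ℓ (u * π (γ.map (iot a b))))
    (hpos : 0 < mord cs a b) :
    ∀ k, k ≤ mord cs a b → ∀ (c₀ c : Bool) (n : ℕ), mord cs a b ≤ n →
      altProj cs a b n c (u * fel cs a b c₀ k) = u := by
  intro k hk c₀ c n hn
  rcases Nat.eq_zero_or_pos k with rfl | hkpos
  · rw [fel_zero, mul_one]
    exact altProj_min cs a b hmin n c
  obtain ⟨n', rfl⟩ : ∃ n', n = n' + 1 := ⟨n - 1, by omega⟩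
  by_cases hc : c = c₀
  · subst hc
    rw [altProj_succ, step_down cs a b hmin hkpos hk]
    exact aligned cs a b hmin (k - 1) (by omega) n' (!c) (by omega)
  · have hc' : c = !c₀ := by cases c <;> cases c₀ <;> simp_all
    subst hc'
    by_cases hktop : k = mord cs a b
    · subst hktop
      rw [altProj_succ, step_top cs a b hmin hpos, Bool.not_not]
      exact aligned cs a b hmin (mord cs a b - 1) (by omega) n' c₀ (by omega)
    · rw [altProj_succ, step_up cs a b hmin (by omega), Bool.not_not]
      exact aligned cs a b hmin k (by omega) n' c₀ (by omega)

lemma exists_min (w : W) :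
    ∃ u : W, (∀ γ : List Bool, ℓ u ≤ ℓ (u * π (γ.map (iot a b)))) ∧
      ∃ β : List Bool, w = u * π (β.map (iot a b)) := by
  classical
  have hne : {n | ∃ β : List Bool, ℓ (w * π (β.map (iot a b))) = n}.Nonempty :=
    ⟨ℓ w, [], by simp⟩
  obtain ⟨β₀, hβ₀⟩ := Nat.sInf_mem hne
  refine ⟨w * π (β₀.map (iot a b)), ?_, ⟨β₀.reverse, ?_⟩⟩
  · intro γ
    have hmem : ℓ (w * π (β₀.map (iot a b)) * π (γ.map (iot a b)))
        ∈ {n | ∃ β : List Bool, ℓ (w * π (β.map (iot a b))) = n} :=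
      ⟨β₀ ++ γ, by rw [List.map_append, cs.wordProd_append, mul_assoc]⟩
    have hle := Nat.sInf_le hmem
    rw [hβ₀]
    exact hle
  · rw [mul_assoc, List.map_reverse, cs.wordProd_reverse, mul_inv_cancel, mul_one]

lemma mord_pos (hM : M.M a b ≠ 0) : 0 < mord cs a b := by
  have hp : (dgen cs a b) ^ M.M a b = 1 := cs.simple_mul_simple_pow a b
  exact orderOf_pos_iff.mpr (isOfFinOrder_iff_pow_eq_one.mpr
    ⟨M.M a b, Nat.pos_of_ne_zero hM, hp⟩)

lemma mord_le (hM : M.M a b ≠ 0) : mord cs a b ≤ M.M a b := by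
  have hp : (dgen cs a b) ^ M.M a b = 1 := cs.simple_mul_simple_pow a b
  exact Nat.le_of_dvd (Nat.pos_of_ne_zero hM) (orderOf_dvd_of_pow_eq_one hp)

lemma altProj_braid (hM : M.M a b ≠ 0) (w : W) (n : ℕ) (hn : mord cs a b ≤ n) (c c' : Bool) :
    altProj cs a b n c w = altProj cs a b n c' w := by
  obtain ⟨u, hmin, β, rfl⟩ := exists_min cs a b w
  obtain ⟨c₁, k₁, hk₁, heq⟩ := w1 cs a b β
  have hpos := mord_pos cs a b hM
  obtain ⟨c₀, k, hk, heq2⟩ := reduceFel cs a b hpos k₁ c₁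
  rw [heq, heq2]
  rw [main_dyn cs a b hmin hpos k hk c₀ c n hn, main_dyn cs a b hmin hpos k hk c₀ c' n hn]

/-! ### iterate correspondence -/

lemma iterate_eq_altProj (c : Bool) (k : ℕ) (w : W) :
    (cs.projSimple (iot a b (!c)) ∘ cs.projSimple (iot a b c))^[k] w
      = altProj cs a b (2 * k) c w := by
  induction k generalizing w with
  | zero => rfl
  | succ k ih =>
    rw [Function.iterate_succ_apply, ih]
    have h2 : 2 * (k + 1) = 2 * k + 1 + 1 := by ring
    rw [h2, altProj_succ, altProj_succ, Bool.not_not]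
    rfl

lemma altProj_back (n : ℕ) (c : Bool) (w : W) :
    altProj cs a b (n + 1) c w
      = cs.projSimple (iot a b (if Even n then c else !c)) (altProj cs a b n c w) := by
  induction n generalizing c w with
  | zero => rfl
  | succ n ih =>
    rw [altProj_succ, ih, ← altProj_succ]
    congr 2
    rcases Nat.even_or_odd n with hp | hp
    · have h1 : ¬ Even (n + 1) := by simp [Nat.even_add_one, hp]
      rw [if_pos hp, if_neg h1]
    · obtain ⟨t, rfl⟩ := hp
      have h0 : ¬ Even (2 * t + 1) := by rintro ⟨v, hv⟩; omega
      have h1 : Even (2 * t + 1 + 1) := ⟨t + 1, by ring⟩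
      rw [if_neg h0, if_pos h1, Bool.not_not]

end Dihedral

end StmtAux

end Aux

open StmtAux

theorem stmt_10 (cs : CoxeterSystem M W) (s t : B) (hfin : M s t ≠ 0) :
    (Even (M s t) →
      (cs.projSimple s ∘ cs.projSimple t)^[M s t / 2] =
      (cs.projSimple t ∘ cs.projSimple s)^[M s t / 2]) ∧
    (Odd (M s t) →
      cs.projSimple t ∘ (cs.projSimple s ∘ cs.projSimple t)^[(M s t - 1) / 2] =
      cs.projSimple s ∘ (cs.projSimple t ∘ cs.projSimple s)^[(M s t - 1) / 2]) := by
  have hle : mord cs s t ≤ M.M s t := mord_le cs s t hfin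
  constructor
  · intro heven
    obtain ⟨r, hr⟩ := heven
    have hdiv : M.M s t / 2 = r := by omega
    rw [hdiv]
    funext w
    have h1 : (cs.projSimple s ∘ cs.projSimple t)^[r] w = altProj cs s t (2 * r) false w :=
      iterate_eq_altProj cs s t false r w
    have h2 : (cs.projSimple t ∘ cs.projSimple s)^[r] w = altProj cs s t (2 * r) true w :=
      iterate_eq_altProj cs s t true r w
    rw [h1, h2]
    exact altProj_braid cs s t hfin w (2 * r) (by omega) false true
  · intro hodd
    obtain ⟨r, hr⟩ := hodd
    have hdiv : (M.M s t - 1) / 2 = r := by omega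
    rw [hdiv]
    funext w
    have h1 : (cs.projSimple s ∘ cs.projSimple t)^[r] w = altProj cs s t (2 * r) false w :=
      iterate_eq_altProj cs s t false r w
    have h2 : (cs.projSimple t ∘ cs.projSimple s)^[r] w = altProj cs s t (2 * r) true w :=
      iterate_eq_altProj cs s t true r w
    show cs.projSimple t ((cs.projSimple s ∘ cs.projSimple t)^[r] w)
        = cs.projSimple s ((cs.projSimple t ∘ cs.projSimple s)^[r] w)
    rw [h1, h2]
    have hb1 : altProj cs s t (2 * r + 1) false w
        = cs.projSimple t (altProj cs s t (2 * r) false w) := by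
      rw [altProj_back cs s t (2 * r) false w, if_pos ⟨r, by ring⟩]
      rfl
    have hb2 : altProj cs s t (2 * r + 1) true w
        = cs.projSimple s (altProj cs s t (2 * r) true w) := by
      rw [altProj_back cs s t (2 * r) true w, if_pos ⟨r, by ring⟩]
      rfl
    rw [← hb1, ← hb2]
    exact altProj_braid cs s t hfin w (2 * r + 1) (by omega) false true
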